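/- Let n, ℓ be positive integers with ℓ > 1 and √(ℓn) ∉ ℤ. Then the group S_{n,ℓ} is isomorphic to ℤ ⊕ ℤ/2ℤ. -/

import Mathlib

/-- The set `S_{n,ℓ}` of matrices `P(x,y) = [[y, ℓx],[x, y]]` with `x = a√r`, `y = b√s`,
`a, b ∈ ℤ`, `r, s ∈ ℤ_{>0}`, `rs = n`, and `y² − ℓx² = ±1`. -/
def Sset (n ℓ : ℕ) : Set (Matrix (Fin 2) (Fin 2) ℝ) :=
  {M | ∃ (a b : ℤ) (r s : ℕ), 0 < r ∧ 0 < s ∧ r * s = n ∧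
    M = !![(b : ℝ) * Real.sqrt s, (ℓ : ℝ) * ((a : ℝ) * Real.sqrt r);
           (a : ℝ) * Real.sqrt r, (b : ℝ) * Real.sqrt s] ∧
    (((b : ℝ) * Real.sqrt s) ^ 2 - (ℓ : ℝ) * ((a : ℝ) * Real.sqrt r) ^ 2 = 1 ∨
     ((b : ℝ) * Real.sqrt s) ^ 2 - (ℓ : ℝ) * ((a : ℝ) * Real.sqrt r) ^ 2 = -1)}

namespace SnlAux

/-- the map `!![y, ℓx; x, y] ↦ y + x √ℓ`. -/
noncomputable def fraw (ℓ : ℕ) (g : GL (Fin 2) ℝ) : ℝ :=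
  (g : Matrix (Fin 2) (Fin 2) ℝ) 1 1 + (g : Matrix (Fin 2) (Fin 2) ℝ) 1 0 * Real.sqrt ℓ

variable {n ℓ : ℕ} {G : Subgroup (GL (Fin 2) ℝ)}
  (hG : ∀ g : GL (Fin 2) ℝ, g ∈ G ↔ (g : Matrix (Fin 2) (Fin 2) ℝ) ∈ Sset n ℓ)

include hG in
theorem mem_shape {g : GL (Fin 2) ℝ} (hg : g ∈ G) :
    ∃ (a b : ℤ) (r s : ℕ), 0 < r ∧ 0 < s ∧ r * s = n ∧
    (g : Matrix (Fin 2) (Fin 2) ℝ) = !![(b : ℝ) * Real.sqrt s, (ℓ : ℝ) * ((a : ℝ) * Real.sqrt r);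
           (a : ℝ) * Real.sqrt r, (b : ℝ) * Real.sqrt s] ∧
    (((b : ℝ) * Real.sqrt s) ^ 2 - (ℓ : ℝ) * ((a : ℝ) * Real.sqrt r) ^ 2 = 1 ∨
     ((b : ℝ) * Real.sqrt s) ^ 2 - (ℓ : ℝ) * ((a : ℝ) * Real.sqrt r) ^ 2 = -1) :=
  (hG g).mp hg

theorem fraw_shape {g : GL (Fin 2) ℝ} {a b : ℤ} {r s : ℕ}
    (hm : (g : Matrix (Fin 2) (Fin 2) ℝ) =
      !![(b : ℝ) * Real.sqrt s, (ℓ : ℝ) * ((a : ℝ) * Real.sqrt r);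
         (a : ℝ) * Real.sqrt r, (b : ℝ) * Real.sqrt s]) :
    fraw ℓ g = (b : ℝ) * Real.sqrt s + (a : ℝ) * Real.sqrt r * Real.sqrt ℓ := by
  simp [fraw, hm]

theorem fraw_one : fraw ℓ (1 : GL (Fin 2) ℝ) = 1 := by
  have h : ((1 : GL (Fin 2) ℝ) : Matrix (Fin 2) (Fin 2) ℝ) = 1 := rfl
  simp [fraw, h, Matrix.one_apply]

include hG in
theorem fraw_mul {g h : GL (Fin 2) ℝ} (hg : g ∈ G) (hh : h ∈ G) :
    fraw ℓ (g * h) = fraw ℓ g * fraw ℓ h := by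
  obtain ⟨a, b, r, s, _, _, _, hm, _⟩ := mem_shape hG hg
  obtain ⟨a', b', r', s', _, _, _, hm', _⟩ := mem_shape hG hh
  have hcoe : ((g * h : GL (Fin 2) ℝ) : Matrix (Fin 2) (Fin 2) ℝ)
      = (g : Matrix (Fin 2) (Fin 2) ℝ) * (h : Matrix (Fin 2) (Fin 2) ℝ) := rfl
  have hl : Real.sqrt ℓ * Real.sqrt ℓ = (ℓ : ℝ) := Real.mul_self_sqrt (by positivity)
  rw [fraw, hcoe, hm, hm', Matrix.mul_fin_two, fraw_shape hm, fraw_shape hm']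
  simp only [Matrix.cons_val', Matrix.cons_val_zero, Matrix.cons_val_one, Matrix.head_cons,
    Matrix.head_fin_const, Matrix.empty_val', Matrix.cons_val_fin_one, Matrix.of_apply]
  linear_combination (-( (a:ℝ) * Real.sqrt r * ((a':ℝ) * Real.sqrt r'))) * hl

end SnlAux
namespace SnlAux
variable {n ℓ : ℕ} {G : Subgroup (GL (Fin 2) ℝ)}
  (hG : ∀ g : GL (Fin 2) ℝ, g ∈ G ↔ (g : Matrix (Fin 2) (Fin 2) ℝ) ∈ Sset n ℓ)

include hG in
theorem fraw_inv_mul (g : G) : fraw ℓ (g : GL (Fin 2) ℝ) * fraw ℓ ((g⁻¹ : G) : GL (Fin 2) ℝ) = 1 := by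
  rw [← fraw_mul hG g.2 (g⁻¹ : G).2]
  have : (g : GL (Fin 2) ℝ) * ((g⁻¹ : G) : GL (Fin 2) ℝ) = 1 := by
    rw [← Subgroup.coe_mul, mul_inv_cancel, Subgroup.coe_one]
  rw [this, fraw_one]

/-- `fraw` as a monoid hom from `G` to `ℝˣ`. -/
noncomputable def fu : G →* ℝˣ where
  toFun g := ⟨fraw ℓ (g : GL (Fin 2) ℝ), fraw ℓ ((g⁻¹ : G) : GL (Fin 2) ℝ),
    fraw_inv_mul hG g, by rw [mul_comm]; exact fraw_inv_mul hG g⟩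
  map_one' := by
    ext
    exact fraw_one
  map_mul' g h := by
    ext
    exact fraw_mul hG g.2 h.2

theorem fu_val (g : G) : ((fu hG g : ℝˣ) : ℝ) = fraw ℓ (g : GL (Fin 2) ℝ) := rfl

include hG in
theorem mem_of_data (a b : ℤ) (r s : ℕ) (hr : 0 < r) (hs : 0 < s) (hrs : r * s = n)
    (hpm : ((b : ℝ) * Real.sqrt s) ^ 2 - (ℓ : ℝ) * ((a : ℝ) * Real.sqrt r) ^ 2 = 1 ∨
      ((b : ℝ) * Real.sqrt s) ^ 2 - (ℓ : ℝ) * ((a : ℝ) * Real.sqrt r) ^ 2 = -1) :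
    ∃ g : G, fraw ℓ (g : GL (Fin 2) ℝ) = (b : ℝ) * Real.sqrt s + (a : ℝ) * Real.sqrt r * Real.sqrt ℓ := by
  set M : Matrix (Fin 2) (Fin 2) ℝ :=
    !![(b : ℝ) * Real.sqrt s, (ℓ : ℝ) * ((a : ℝ) * Real.sqrt r);
       (a : ℝ) * Real.sqrt r, (b : ℝ) * Real.sqrt s] with hM
  have hdet : M.det ≠ 0 := by
    have : M.det = ((b : ℝ) * Real.sqrt s) ^ 2 - (ℓ : ℝ) * ((a : ℝ) * Real.sqrt r) ^ 2 := by
      simp [hM, Matrix.det_fin_two_of]; ring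
    rw [this]
    rcases hpm with h | h <;> rw [h] <;> norm_num
  set g : GL (Fin 2) ℝ := Matrix.GeneralLinearGroup.mkOfDetNeZero M hdet with hg
  have hcoe : (g : Matrix (Fin 2) (Fin 2) ℝ) = M := rfl
  have hmem : g ∈ G := (hG g).mpr ⟨a, b, r, s, hr, hs, hrs, hcoe, hpm⟩
  exact ⟨⟨g, hmem⟩, fraw_shape hcoe⟩

end SnlAux
namespace SnlAux
variable {n ℓ : ℕ} {G : Subgroup (GL (Fin 2) ℝ)}
  (hG : ∀ g : GL (Fin 2) ℝ, g ∈ G ↔ (g : Matrix (Fin 2) (Fin 2) ℝ) ∈ Sset n ℓ)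

include hG in
theorem fu_injective (hℓ : 1 < ℓ) : Function.Injective (fu hG) := by
  rw [injective_iff_map_eq_one]
  intro g hg1
  obtain ⟨a, b, r, s, hr, hs, hrs, hm, hpm⟩ := mem_shape hG g.2
  have hval : fraw ℓ (g : GL (Fin 2) ℝ) = 1 := by
    have := congrArg (Units.val) hg1
    simpa [fu_val] using this
  rw [fraw_shape hm] at hval
  set y : ℝ := (b : ℝ) * Real.sqrt s with hy
  set x : ℝ := (a : ℝ) * Real.sqrt r with hx
  have hl : Real.sqrt ℓ * Real.sqrt ℓ = (ℓ : ℝ) := Real.mul_self_sqrt (by positivity)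
  have hconj : (y + x * Real.sqrt ℓ) * (y - x * Real.sqrt ℓ) = y ^ 2 - (ℓ : ℝ) * x ^ 2 := by
    linear_combination (-(x^2)) * hl
  have hx0 : x = 0 ∧ y = 1 := by
    rcases hpm with h | h
    · -- y - x√ℓ = 1, so 2y = 2, y = 1, x√ℓ = 0
      have h2 : y - x * Real.sqrt ℓ = 1 := by
        rw [hval, one_mul] at hconj; rw [hconj]; exact h
      have hy1 : y = 1 := by linarith [hval, h2]
      have hxs : x * Real.sqrt ℓ = 0 := by linarith [hval, h2]
      have hsl : (0:ℝ) < Real.sqrt ℓ := Real.sqrt_pos.mpr (by positivity)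
      refine ⟨?_, hy1⟩
      rcases mul_eq_zero.mp hxs with h' | h'
      · exact h'
      · exact absurd h' (ne_of_gt hsl)
    · -- y - x√ℓ = -1, y = 0, x√ℓ = 1; impossible since ℓ ≥ 2
      exfalso
      have h2 : y - x * Real.sqrt ℓ = -1 := by
        rw [hval, one_mul] at hconj; rw [hconj]; exact h
      have hy0 : y = 0 := by linarith [hval, h2]
      have hxs : x * Real.sqrt ℓ = 1 := by linarith [hval, h2]
      have hx2 : x ^ 2 * (ℓ : ℝ) = 1 := by
        have := congrArg (fun t => t * t) hxs
        simp only [one_mul] at this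
        calc x ^ 2 * (ℓ:ℝ) = (x * Real.sqrt ℓ) * (x * Real.sqrt ℓ) := by
              linear_combination (-(x^2)) * hl
          _ = 1 := by rw [hxs]; norm_num
      have ha0 : a ≠ 0 := by
        rintro rfl
        rw [hx] at hxs; norm_num at hxs
      have h1a : (1:ℝ) ≤ (a:ℝ)^2 := by
        have h1 := Int.one_le_abs ha0
        have : (1:ℤ) ≤ a^2 := by nlinarith [sq_abs a]
        exact_mod_cast this
      have hxsq : x ^ 2 = (a:ℝ)^2 * r := by
        rw [hx, mul_pow, Real.sq_sqrt (by positivity : (0:ℝ) ≤ (r:ℕ))]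
      have h1r : (1:ℝ) ≤ (r:ℝ) := by exact_mod_cast hr
      have h2l : (2:ℝ) ≤ (ℓ:ℝ) := by exact_mod_cast hℓ
      nlinarith [hx2, hxsq]
  obtain ⟨hx0, hy1⟩ := hx0
  have hmat : (g : GL (Fin 2) ℝ) = 1 := by
    apply Units.ext
    rw [hm, hx0, hy1, Units.val_one, mul_zero]
    exact Matrix.one_fin_two.symm
  exact Subtype.ext hmat

end SnlAux
namespace SnlAux
variable {n ℓ : ℕ} {G : Subgroup (GL (Fin 2) ℝ)}
  (hG : ∀ g : GL (Fin 2) ℝ, g ∈ G ↔ (g : Matrix (Fin 2) (Fin 2) ℝ) ∈ Sset n ℓ)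

include hG in
theorem exists_neg_one (hn : 0 < n) : ∃ g : G, fu hG g = -1 := by
  obtain ⟨g, hg⟩ := mem_of_data hG 0 (-1) n 1 hn one_pos (mul_one n) (Or.inl (by simp))
  refine ⟨g, Units.ext ?_⟩
  rw [fu_val, hg]
  simp [Real.sqrt_one]

include hG in
theorem exists_big (hn : 0 < n) (hℓ : 1 < ℓ) (hirr : ¬∃ m : ℕ, m * m = ℓ * n) :
    ∃ g : G, 1 < ((fu hG g : ℝˣ) : ℝ) := by
  have hd : (0:ℤ) < ((ℓ * n : ℕ) : ℤ) := by
    exact_mod_cast Nat.mul_pos (lt_trans one_pos hℓ) hn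
  have hns : ¬ IsSquare ((ℓ * n : ℕ) : ℤ) := by
    rintro ⟨m, hm⟩
    refine hirr ⟨m.natAbs, ?_⟩
    have h2 : (m.natAbs * m.natAbs : ℤ) = ((ℓ * n : ℕ) : ℤ) := by
      rw [Int.natAbs_mul_self']; exact hm.symm
    exact_mod_cast h2
  obtain ⟨X, Y, hXY, hY⟩ := Pell.exists_of_not_isSquare hd hns
  have hXYr : (X:ℝ) ^ 2 - (ℓ:ℝ) * (n:ℝ) * (Y:ℝ) ^ 2 = 1 := by
    have := congrArg (fun t : ℤ => (t : ℝ)) hXY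
    push_cast at this
    linarith
  obtain ⟨g, hg⟩ := mem_of_data hG |Y| |X| n 1 hn one_pos (mul_one n) (Or.inl (by
    rw [mul_pow, mul_pow, Real.sq_sqrt (by positivity : (0:ℝ) ≤ ((n:ℕ):ℝ))]
    push_cast [sq_abs]
    rw [Real.sqrt_one]
    ring_nf
    ring_nf at hXYr
    linarith))
  refine ⟨g, ?_⟩
  rw [fu_val, hg, Nat.cast_one, Real.sqrt_one, mul_one]
  have hX2 : (2:ℤ) ≤ |X| := by
    have h1 : (1:ℤ) ≤ |Y| := Int.one_le_abs hY
    have h2 : (2:ℤ) ≤ ((ℓ * n : ℕ) : ℤ) := by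
      have : 2 ≤ ℓ * n := le_trans hℓ (Nat.le_mul_of_pos_right ℓ hn)
      exact_mod_cast this
    nlinarith [sq_abs X, sq_abs Y, abs_nonneg X, hXY]
  have hX2r : (2:ℝ) ≤ ((|X| : ℤ) : ℝ) := by exact_mod_cast hX2
  have hpos : 0 ≤ ((|Y| : ℤ) : ℝ) * Real.sqrt n * Real.sqrt ℓ := by positivity
  linarith

end SnlAux

/-- for `ℓ > 1` and `√(ℓn) ∉ ℤ` (i.e. `ℓn` is not a perfect square),
the group `S_{n,ℓ}` is isomorphic to `ℤ ⊕ ℤ/2ℤ` (multiplicatively). -/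
theorem Snl_iso_int_prod_zmod2 (n ℓ : ℕ) (hn : 0 < n) (hℓ : 1 < ℓ)
    (hirr : ¬∃ m : ℕ, m * m = ℓ * n)
    (G : Subgroup (GL (Fin 2) ℝ))
    (hG : ∀ g : GL (Fin 2) ℝ, g ∈ G ↔ (g : Matrix (Fin 2) (Fin 2) ℝ) ∈ Sset n ℓ) :
    Nonempty (G ≃* Multiplicative (ℤ × ZMod 2)) := by
  classical
  have hinj := SnlAux.fu_injective hG hℓ
  set f := SnlAux.fu hG with hf
  obtain ⟨gneg, hgneg⟩ := SnlAux.exists_neg_one hG hn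
  obtain ⟨g₀, hg₀⟩ := SnlAux.exists_big hG hn hℓ hirr
  set v₀ : ℝ := ((f g₀ : ℝˣ) : ℝ) with hv₀
  set T : Set ℝ := {v | (∃ g : G, ((f g : ℝˣ) : ℝ) = v) ∧ 1 < v} with hT
  have hv₀T : v₀ ∈ T := ⟨⟨g₀, rfl⟩, hg₀⟩
  -- finiteness of the bounded part of T
  have hfin : {v | v ∈ T ∧ v ≤ v₀}.Finite := by
    set C : ℤ := ⌈(v₀ + 1) / 2⌉ with hC
    apply Set.Finite.subset (Set.Finite.image
      (fun q : ℤ × ℤ × ℕ × ℕ =>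
        (q.2.1 : ℝ) * Real.sqrt q.2.2.2 + (q.1 : ℝ) * Real.sqrt q.2.2.1 * Real.sqrt ℓ)
      (((Finset.Icc (-C) C) ×ˢ (Finset.Icc (-C) C) ×ˢ (Finset.Iic n) ×ˢ (Finset.Iic n)).finite_toSet))
    rintro v ⟨⟨⟨g, hgv⟩, hv1⟩, hvB⟩
    obtain ⟨a, b, r, s, hr, hs, hrs, hm, hpm⟩ := SnlAux.mem_shape hG g.2
    have hval : v = (b : ℝ) * Real.sqrt s + (a : ℝ) * Real.sqrt r * Real.sqrt ℓ := by
      rw [← hgv, SnlAux.fu_val, SnlAux.fraw_shape hm]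
    set y : ℝ := (b : ℝ) * Real.sqrt s with hy
    set x : ℝ := (a : ℝ) * Real.sqrt r with hx
    have hl : Real.sqrt ℓ * Real.sqrt ℓ = (ℓ : ℝ) := Real.mul_self_sqrt (by positivity)
    have hconj : (y + x * Real.sqrt ℓ) * (y - x * Real.sqrt ℓ) = y ^ 2 - (ℓ:ℝ) * x ^ 2 := by
      linear_combination (-(x ^ 2)) * hl
    have hvpos : (0:ℝ) < v := lt_trans one_pos hv1
    have habs : |y + x * Real.sqrt ℓ| * |y - x * Real.sqrt ℓ| = 1 := by
      rw [← abs_mul, hconj]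
      rcases hpm with h | h <;> rw [h] <;> norm_num
    have hvabs : |y + x * Real.sqrt ℓ| = v := by
      rw [← hval]; exact abs_of_pos hvpos
    have hwle : |y - x * Real.sqrt ℓ| ≤ 1 := by
      rw [hvabs] at habs
      nlinarith [abs_nonneg (y - x * Real.sqrt ℓ)]
    have hybound : |y| ≤ (v₀ + 1) / 2 := by
      have h2y : 2 * y = (y + x * Real.sqrt ℓ) + (y - x * Real.sqrt ℓ) := by ring
      have := abs_add_le (y + x * Real.sqrt ℓ) (y - x * Real.sqrt ℓ)
      rw [← h2y] at this
      rw [abs_mul, abs_two] at this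
      linarith [hvabs, hwle, this, hvB]
    have hxbound : |x * Real.sqrt ℓ| ≤ (v₀ + 1) / 2 := by
      have h2x : 2 * (x * Real.sqrt ℓ) = (y + x * Real.sqrt ℓ) - (y - x * Real.sqrt ℓ) := by ring
      have := abs_sub (y + x * Real.sqrt ℓ) (y - x * Real.sqrt ℓ)
      rw [← h2x] at this
      rw [abs_mul, abs_two] at this
      linarith [hvabs, hwle, this, hvB]
    have hCb : (v₀ + 1) / 2 ≤ (C : ℝ) := Int.le_ceil _
    have hsq1 : (1:ℝ) ≤ Real.sqrt s := Real.one_le_sqrt.mpr (by exact_mod_cast hs)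
    have hrq1 : (1:ℝ) ≤ Real.sqrt r := Real.one_le_sqrt.mpr (by exact_mod_cast hr)
    have hlq1 : (1:ℝ) ≤ Real.sqrt ℓ := Real.one_le_sqrt.mpr (by
      exact_mod_cast le_of_lt hℓ)
    have hbabs : |b| ≤ C := by
      have h1 : |y| = |(b:ℝ)| * Real.sqrt s := by
        rw [hy, abs_mul, abs_of_nonneg (Real.sqrt_nonneg _)]
      have h2 : |(b:ℝ)| ≤ |y| := by
        rw [h1]; exact le_mul_of_one_le_right (abs_nonneg _) hsq1
      have h3 : ((|b| : ℤ) : ℝ) ≤ (C : ℝ) := by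
        rw [Int.cast_abs]; linarith
      exact_mod_cast h3
    have haabs : |a| ≤ C := by
      have h1 : |x * Real.sqrt ℓ| = |(a:ℝ)| * (Real.sqrt r * Real.sqrt ℓ) := by
        rw [hx, abs_mul, abs_mul, abs_of_nonneg (Real.sqrt_nonneg (r:ℝ)),
          abs_of_nonneg (Real.sqrt_nonneg (ℓ:ℝ))]
        ring
      have hge1 : (1:ℝ) ≤ Real.sqrt r * Real.sqrt ℓ := one_le_mul_of_one_le_of_one_le hrq1 hlq1
      have h2 : |(a:ℝ)| ≤ |x * Real.sqrt ℓ| := by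
        rw [h1]; exact le_mul_of_one_le_right (abs_nonneg _) hge1
      have h3 : ((|a| : ℤ) : ℝ) ≤ (C : ℝ) := by
        rw [Int.cast_abs]; linarith
      exact_mod_cast h3
    have hrn : r ≤ n := by
      calc r ≤ r * s := Nat.le_mul_of_pos_right r hs
        _ = n := hrs
    have hsn : s ≤ n := by
      calc s ≤ r * s := Nat.le_mul_of_pos_left s hr
        _ = n := hrs
    refine ⟨(a, b, r, s), ?_, hval.symm⟩
    simp only [Finset.coe_product, Set.mem_prod, Finset.mem_coe, Finset.mem_Icc, Finset.mem_Iic]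
    exact ⟨abs_le.mp haabs, abs_le.mp hbabs, hrn, hsn⟩
  -- the minimum of T
  obtain ⟨εr, hεT, hεmin⟩ : ∃ εr ∈ T, ∀ v ∈ T, εr ≤ v := by
    have hv₀mem : v₀ ∈ hfin.toFinset := by
      rw [Set.Finite.mem_toFinset]; exact ⟨hv₀T, le_refl _⟩
    have hne : hfin.toFinset.Nonempty := ⟨v₀, hv₀mem⟩
    refine ⟨hfin.toFinset.min' hne, ?_, ?_⟩
    · have := hfin.toFinset.min'_mem hne
      rw [Set.Finite.mem_toFinset] at this
      exact this.1
    · intro v hv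
      by_cases hle : v ≤ v₀
      · exact hfin.toFinset.min'_le v (by rw [Set.Finite.mem_toFinset]; exact ⟨hv, hle⟩)
      · have h1 := hfin.toFinset.min'_le v₀ hv₀mem
        linarith [lt_of_not_ge hle]
  obtain ⟨⟨gε, hgε⟩, hε1⟩ := hεT
  have hε0 : (0:ℝ) < εr := lt_trans one_pos hε1
  -- every positive element is a power of the minimum
  have hposgen : ∀ g : G, 0 < ((f g : ℝˣ) : ℝ) → ∃ k : ℤ, f g = f gε ^ k := by
    intro g hpos
    obtain ⟨k, hk1, hk2⟩ := exists_mem_Ico_zpow hpos hε1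
    set u : ℝˣ := f g * (f gε) ^ (-k) with hu
    have huval : (u : ℝ) = ((f g : ℝˣ) : ℝ) * εr ^ (-k) := by
      rw [hu, Units.val_mul, Units.val_zpow_eq_zpow_val, hgε]
    have hεk : (0:ℝ) < εr ^ k := zpow_pos hε0 k
    have h1le : 1 ≤ (u : ℝ) := by
      rw [huval, zpow_neg, ← div_eq_mul_inv]
      exact (one_le_div hεk).mpr hk1
    have hlt : (u : ℝ) < εr := by
      rw [huval, zpow_neg, ← div_eq_mul_inv]
      rw [div_lt_iff₀ hεk]
      calc ((f g : ℝˣ) : ℝ) < εr ^ (k + 1) := hk2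
        _ = εr * εr ^ k := by rw [zpow_add_one₀ (ne_of_gt hε0)]; ring
    have hu1 : (u : ℝ) = 1 := by
      by_contra hne
      have hmemT : (u : ℝ) ∈ T := by
        refine ⟨⟨g * gε ^ (-k), ?_⟩, lt_of_le_of_ne' (by linarith [lt_of_le_of_ne h1le (Ne.symm hne)]) hne⟩
        rw [map_mul, map_zpow]
      have := hεmin _ hmemT
      linarith
    have huu : u = 1 := Units.ext hu1
    refine ⟨k, ?_⟩
    calc f g = (f g * (f gε) ^ (-k)) * (f gε) ^ k := by
          rw [mul_assoc, ← zpow_add]; norm_num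
      _ = (f gε) ^ k := by rw [← hu, huu, one_mul]
  have hgen : ∀ g : G, ∃ k : ℤ, f g = f gε ^ k ∨ f g = -(f gε ^ k) := by
    intro g
    rcases lt_trichotomy (0:ℝ) ((f g : ℝˣ) : ℝ) with h | h | h
    · obtain ⟨k, hk⟩ := hposgen g h
      exact ⟨k, Or.inl hk⟩
    · exact absurd h.symm (f g).ne_zero
    · obtain ⟨k, hk⟩ := hposgen (gneg * g) (by
        rw [map_mul, hgneg]
        rw [Units.val_mul, Units.val_neg, Units.val_one]
        linarith)
      refine ⟨k, Or.inr ?_⟩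
      rw [map_mul, hgneg] at hk
      calc f g = -(-1 * f g) := by rw [neg_one_mul, neg_neg]
        _ = -(f gε ^ k) := by rw [hk]
  -- the sign map
  set sgn : ZMod 2 → ℝˣ := fun j => if j = 0 then 1 else -1 with hsgn_def
  have hsgn : ∀ j j' : ZMod 2, sgn (j + j') = sgn j * sgn j' := by
    intro j j'
    clear * - hsgn_def
    fin_cases j <;> fin_cases j' <;> simp [hsgn_def] <;> split_ifs <;> simp_all <;> contradiction
  -- the homomorphism from Multiplicative (ℤ × ZMod 2)
  set ψ : Multiplicative (ℤ × ZMod 2) →* ℝˣ :=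
    { toFun := fun p => sgn (Multiplicative.toAdd p).2 * f gε ^ (Multiplicative.toAdd p).1
      map_one' := by simp [hsgn_def]
      map_mul' := by
        intro p q
        simp only [toAdd_mul, Prod.fst_add, Prod.snd_add]
        rw [hsgn, zpow_add]
        exact mul_mul_mul_comm _ _ _ _ } with hψ_def
  have hψval : ∀ p : Multiplicative (ℤ × ZMod 2),
      ψ p = sgn (Multiplicative.toAdd p).2 * f gε ^ (Multiplicative.toAdd p).1 := fun _ => rfl
  have hmemψ : ∀ p, ψ p ∈ f.range := by
    intro p
    rw [hψval]
    apply Subgroup.mul_mem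
    · by_cases h : (Multiplicative.toAdd p).2 = 0
      · simp only [hsgn_def, h, if_pos rfl]
        exact Subgroup.one_mem _
      · simp only [hsgn_def, if_neg h]
        exact MonoidHom.mem_range.mpr ⟨gneg, hgneg⟩
    · exact Subgroup.zpow_mem _ (MonoidHom.mem_range.mpr ⟨gε, rfl⟩) _
  set ψ' : Multiplicative (ℤ × ZMod 2) →* f.range := ψ.codRestrict f.range hmemψ with hψ'_def
  have hψ'val : ∀ p, ((ψ' p : f.range) : ℝˣ) = ψ p := fun _ => rfl
  have hbij : Function.Bijective ψ' := by
    constructor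
    · rw [injective_iff_map_eq_one]
      intro p hp
      have hval1 : ψ p = 1 := by
        rw [← hψ'val p, hp]; rfl
      rw [hψval] at hval1
      set k : ℤ := (Multiplicative.toAdd p).1 with hk_def
      set j : ZMod 2 := (Multiplicative.toAdd p).2 with hj_def
      have hjk : j = 0 ∧ k = 0 := by
        by_cases h : j = 0
        · refine ⟨h, ?_⟩
          rw [h] at hval1
          simp only [hsgn_def, if_pos rfl, one_mul] at hval1
          have : εr ^ k = εr ^ (0:ℤ) := by
            have := congrArg Units.val hval1
            rw [Units.val_zpow_eq_zpow_val, hgε, Units.val_one] at this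
            rw [this]; norm_num
          exact (zpow_right_strictMono₀ hε1).injective this
        · exfalso
          simp only [hsgn_def, if_neg h] at hval1
          have := congrArg Units.val hval1
          rw [Units.val_mul, Units.val_neg, Units.val_one, Units.val_zpow_eq_zpow_val, hgε] at this
          have hεk : (0:ℝ) < εr ^ k := zpow_pos hε0 k
          nlinarith
      have hprod : Multiplicative.toAdd p = (0 : ℤ × ZMod 2) := by
        rw [Prod.ext_iff]
        exact ⟨hjk.2, hjk.1⟩
      have : p = Multiplicative.ofAdd 0 := by
        rw [← hprod]
        rfl
      rw [this]
      rfl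
    · rintro ⟨u, hu⟩
      obtain ⟨g, hgu⟩ := MonoidHom.mem_range.mp hu
      obtain ⟨k, hk | hk⟩ := hgen g
      · refine ⟨Multiplicative.ofAdd (k, 0), Subtype.ext ?_⟩
        rw [hψ'val, hψval]
        simp only [hsgn_def]
        have h0 : ((Multiplicative.toAdd (Multiplicative.ofAdd ((k, (0 : ZMod 2))))).2 = 0) := rfl
        rw [if_pos h0, one_mul]
        exact (show f gε ^ k = u by rw [← hk, hgu])
      · refine ⟨Multiplicative.ofAdd (k, 1), Subtype.ext ?_⟩
        rw [hψ'val, hψval]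
        simp only [hsgn_def]
        have h1 : ¬((Multiplicative.toAdd (Multiplicative.ofAdd ((k, (1 : ZMod 2))))).2 = 0) :=
          fun h => one_ne_zero (show (1 : ZMod 2) = 0 from h)
        rw [if_neg h1, neg_one_mul]
        exact (show -(f gε ^ k) = u by rw [← hk, hgu])
  exact ⟨(MonoidHom.ofInjective hinj).trans (MulEquiv.ofBijective ψ' hbij).symm⟩
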